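/- arXiv:2307.03964 — 3 statements merged into one kernel-verified Lean document; each statement's English description precedes it below -/
import Mathlib

section
/- Let G = (V, E) be a graph with no isolated vertices and at least one edge, and let k be a positive integer. Construct the split graph G̃ as follows: for each edge uv ∈ E introduce three new vertices s_{uv}, s'_{uv}, s''_{uv}, let V_s = {s_{uv}, s'_{uv}, s''_{uv} : uv ∈ E}, set V(G̃) = V ∪ V_s, and let E(G̃) consist of the edges us_{uv}, us'_{uv}, us''_{uv}, vs_{uv}, vs'_{uv}, vs''_{uv} for each uv ∈ E together with all edges between pairs of vertices of V_s (so that V_s forms a clique). Then χ(G) ≤ k if and only if rvd(G̃) ≤ k + 3|E|. -/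
open SimpleGraph

variable {V : Type*}

/-- `c` is a rainbow vertex-disconnection coloring of `G`: for any two distinct vertices
`x, y` there is a set `S` avoiding `x` and `y` that meets every `x`-`y` walk of `G - xy`
(i.e. `x` and `y` lie in different components of `(G - xy) - S`), and which is rainbow
(when `x, y` nonadjacent), resp. such that `S + x` or `S + y` is rainbow (when adjacent). -/
def IsRVDColoring {α : Type*} (G : SimpleGraph V) (c : V → α) : Prop :=
  ∀ x y : V, x ≠ y → ∃ S : Set V,
    x ∉ S ∧ y ∉ S ∧
    (∀ p : (G.deleteEdges {s(x, y)}).Walk x y, ∃ v ∈ p.support, v ∈ S) ∧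
    (G.Adj x y → Set.InjOn c (insert x S) ∨ Set.InjOn c (insert y S)) ∧
    (¬ G.Adj x y → Set.InjOn c S)

/-- The rainbow vertex-disconnection number: the minimum number of colors of a
rainbow vertex-disconnection coloring. -/
noncomputable def rvd (G : SimpleGraph V) : ℕ :=
  sInf {n | ∃ c : V → Fin n, IsRVDColoring G c}

/-- `G` contains `K₄` as a minor (via a minor model with four branch sets). -/
def HasK4Minor (G : SimpleGraph V) : Prop :=
  ∃ B : Fin 4 → Set V,
    (∀ i, (B i).Nonempty) ∧
    (∀ i, (G.induce (B i)).Connected) ∧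
    (∀ i j, i ≠ j → Disjoint (B i) (B j)) ∧
    (∀ i j, i ≠ j → ∃ a ∈ B i, ∃ b ∈ B j, G.Adj a b)

/-- A finite graph is 2-connected if it has at least 3 vertices and deleting any
single vertex leaves a connected graph. -/
def TwoConnected [Fintype V] (G : SimpleGraph V) : Prop :=
  3 ≤ Fintype.card V ∧ ∀ w : V, (G.induce ({w}ᶜ : Set V)).Connected

/-- Contraction of the edge `uv`: delete `v` and join `u` to the former neighbors of `v`. -/
def contractEdge (G : SimpleGraph V) (u v : V) : SimpleGraph {x : V // x ≠ v} where
  Adj a b := a ≠ b ∧ (G.Adj a b ∨ ((a : V) = u ∧ G.Adj v b) ∨ ((b : V) = u ∧ G.Adj v a))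
  symm := by
    constructor
    rintro a b ⟨h1, h2⟩
    refine ⟨h1.symm, ?_⟩
    rcases h2 with h | h | h
    · exact Or.inl h.symm
    · exact Or.inr (Or.inr h)
    · exact Or.inr (Or.inl h)
  loopless := by constructor; rintro a ⟨h, _⟩; exact h rfl

/-- `T_G(u)`: vertices `x` of degree at least 3 that are adjacent to `u` or joined
to `u` through a `2`-vertex. -/
def Tset [Fintype V] (G : SimpleGraph V) [DecidableRel G.Adj] (u : V) : Set V :=
  {x | 3 ≤ G.degree x ∧ (G.Adj u x ∨ ∃ z : V, G.degree z = 2 ∧ G.Adj u z ∧ G.Adj z x)}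

/-- `t_G(u) = |T_G(u)|`. -/
noncomputable def tnum [Fintype V] (G : SimpleGraph V) [DecidableRel G.Adj] (u : V) : ℕ :=
  (Tset G u).ncard

/-- An injective coloring: vertices with a common neighbor get distinct colors. -/
def IsInjectiveColoring {α : Type*} (G : SimpleGraph V) (c : V → α) : Prop :=
  ∀ u v w : V, G.Adj u w → G.Adj v w → u ≠ v → c u ≠ c v

/-- The injective chromatic number. -/
noncomputable def injChromaticNumber (G : SimpleGraph V) : ℕ :=
  sInf {n | ∃ c : V → Fin n, IsInjectiveColoring G c}

/-- A graph has no cut vertex if deleting any vertex leaves a preconnected graph. -/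
def HasNoCutVertex {W : Type*} (H : SimpleGraph W) : Prop :=
  ∀ w : W, (H.induce ({w}ᶜ : Set W)).Preconnected

/-- A block of `G`: a maximal connected subgraph of `G` without a cut vertex. -/
def IsBlock (G : SimpleGraph V) (H : G.Subgraph) : Prop :=
  H.coe.Connected ∧ HasNoCutVertex H.coe ∧
    ∀ H' : G.Subgraph, H ≤ H' → H'.coe.Connected → HasNoCutVertex H'.coe → H' = H

/-- `c` is a `k`-fold coloring: each vertex receives `k` colors, adjacent vertices get
disjoint color sets. -/
def IsKFoldColoring {n : ℕ} (G : SimpleGraph V) (k : ℕ) (c : V → Finset (Fin n)) : Prop :=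
  (∀ v, (c v).card = k) ∧ ∀ u v, G.Adj u v → Disjoint (c u) (c v)

/-- The `k`-fold chromatic number `χ_k(G)`. -/
noncomputable def kfoldChromaticNumber (G : SimpleGraph V) (k : ℕ) : ℕ :=
  sInf {n | ∃ c : V → Finset (Fin n), IsKFoldColoring G k c}

/-- The fractional chromatic number `χ_f(G) = inf_k χ_k(G)/k`. -/
noncomputable def fracChromaticNumber (G : SimpleGraph V) : ℝ :=
  ⨅ k : {k : ℕ // 0 < k}, (kfoldChromaticNumber G k : ℝ) / (k : ℕ)

/-- The chromatic number as a natural number. -/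
noncomputable def natChromaticNumber (G : SimpleGraph V) : ℕ :=
  sInf {n | G.Colorable n}

/-- The independence number `α(G)`. -/
noncomputable def indepNumber (G : SimpleGraph V) : ℕ :=
  sSup {n | ∃ s : Set V, (∀ u ∈ s, ∀ v ∈ s, ¬ G.Adj u v) ∧ s.ncard = n}

/-- The bipartite graph `G̃` from the reduction: original vertices `V`, vertices
`s_{uv}, s'_{uv}` (type `↥G.edgeSet × Fin 2`, left summand) and `t_{uv}, t'_{uv}`
(right summand); each of `s_{uv}, s'_{uv}` is joined to `u` and `v`, and all
edges between `V_s` and `V_t` are present. -/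
def tildeBip (G : SimpleGraph V) :
    SimpleGraph (V ⊕ ((↥G.edgeSet × Fin 2) ⊕ (↥G.edgeSet × Fin 2))) :=
  SimpleGraph.fromRel fun x y =>
    (∃ (a : V) (e : ↥G.edgeSet) (i : Fin 2),
        x = Sum.inl a ∧ y = Sum.inr (Sum.inl (e, i)) ∧ a ∈ (e : Sym2 V)) ∨
    (∃ p q, x = Sum.inr (Sum.inl p) ∧ y = Sum.inr (Sum.inr q))

/-- The split graph `G̃` from the reduction: original vertices `V` and a clique on
`V_s = {s_{uv}, s'_{uv}, s''_{uv}}`, each of the three joined to `u` and `v`. -/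
def tildeSplit (G : SimpleGraph V) : SimpleGraph (V ⊕ (↥G.edgeSet × Fin 3)) :=
  SimpleGraph.fromRel fun x y =>
    (∃ (a : V) (e : ↥G.edgeSet) (i : Fin 3),
        x = Sum.inl a ∧ y = Sum.inr (e, i) ∧ a ∈ (e : Sym2 V)) ∨
    (∃ p q, x = Sum.inr p ∧ y = Sum.inr q)

/-- The graph `H`: `k` copies of `V` together with `V_s` and `V_t` as in `tildeBip`. -/
def HBip (G : SimpleGraph V) (k : ℕ) :
    SimpleGraph ((V × Fin k) ⊕ ((↥G.edgeSet × Fin 2) ⊕ (↥G.edgeSet × Fin 2))) :=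
  SimpleGraph.fromRel fun x y =>
    (∃ (a : V) (j : Fin k) (e : ↥G.edgeSet) (i : Fin 2),
        x = Sum.inl (a, j) ∧ y = Sum.inr (Sum.inl (e, i)) ∧ a ∈ (e : Sym2 V)) ∨
    (∃ p q, x = Sum.inr (Sum.inl p) ∧ y = Sum.inr (Sum.inr q))

/-- The graph `H`: `k` copies of `V` together with the clique `V_s` as in `tildeSplit`. -/
def HSplit (G : SimpleGraph V) (k : ℕ) :
    SimpleGraph ((V × Fin k) ⊕ (↥G.edgeSet × Fin 3)) :=
  SimpleGraph.fromRel fun x y =>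
    (∃ (a : V) (j : Fin k) (e : ↥G.edgeSet) (i : Fin 3),
        x = Sum.inl (a, j) ∧ y = Sum.inr (e, i) ∧ a ∈ (e : Sym2 V)) ∨
    (∃ p q, x = Sum.inr p ∧ y = Sum.inr q)


section RVDAux

open SimpleGraph

variable {W : Type*}

lemma cut_aux0 {H : SimpleGraph W} {x y : W} (hxy : x ≠ y) (p : H.Walk x y) :
    ∃ v ∈ p.support, H.Adj x v := by
  cases p with
  | nil => exact absurd rfl hxy
  | cons h q =>
    refine ⟨_, ?_, h⟩
    rw [SimpleGraph.Walk.support_cons]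
    exact List.mem_cons_of_mem _ q.start_mem_support

lemma cut_aux0' {H : SimpleGraph W} {x y : W} (hxy : x ≠ y) (p : H.Walk x y) :
    ∃ v ∈ p.support, H.Adj y v := by
  obtain ⟨v, hv, ha⟩ := cut_aux0 hxy.symm p.reverse
  rw [SimpleGraph.Walk.support_reverse] at hv
  exact ⟨v, List.mem_reverse.mp hv, ha⟩

lemma cut_left (H : SimpleGraph W) {x y : W} (hxy : x ≠ y) :
    x ∉ {v | (H.deleteEdges {s(x, y)}).Adj x v} ∧
      y ∉ {v | (H.deleteEdges {s(x, y)}).Adj x v} ∧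
      ∀ p : (H.deleteEdges {s(x, y)}).Walk x y,
        ∃ v ∈ p.support, v ∈ {v | (H.deleteEdges {s(x, y)}).Adj x v} := by
  refine ⟨fun h => (H.deleteEdges {s(x, y)}).loopless.irrefl x h, ?_, fun p => cut_aux0 hxy p⟩
  intro h
  exact (SimpleGraph.deleteEdges_adj.mp h).2 rfl

lemma cut_right (H : SimpleGraph W) {x y : W} (hxy : x ≠ y) :
    x ∉ {v | (H.deleteEdges {s(x, y)}).Adj y v} ∧
      y ∉ {v | (H.deleteEdges {s(x, y)}).Adj y v} ∧
      ∀ p : (H.deleteEdges {s(x, y)}).Walk x y,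
        ∃ v ∈ p.support, v ∈ {v | (H.deleteEdges {s(x, y)}).Adj y v} := by
  refine ⟨?_, fun h => (H.deleteEdges {s(x, y)}).loopless.irrefl y h, fun p => cut_aux0' hxy p⟩
  intro h
  apply (SimpleGraph.deleteEdges_adj.mp h).2
  rw [Set.mem_singleton_iff, Sym2.eq_swap]

lemma common_in_S {H : SimpleGraph W} {x y w : W} {S : Set W} (hxy : x ≠ y)
    (hx : x ∉ S) (hy : y ∉ S)
    (hcut : ∀ p : (H.deleteEdges {s(x, y)}).Walk x y, ∃ v ∈ p.support, v ∈ S)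
    (h1 : H.Adj x w) (h2 : H.Adj w y) : w ∈ S := by
  have e1 : (H.deleteEdges {s(x, y)}).Adj x w := by
    rw [SimpleGraph.deleteEdges_adj]
    refine ⟨h1, ?_⟩
    rw [Set.mem_singleton_iff]
    intro hq
    exact h2.ne (Sym2.congr_right.mp hq)
  have e2 : (H.deleteEdges {s(x, y)}).Adj w y := by
    rw [SimpleGraph.deleteEdges_adj]
    refine ⟨h2, ?_⟩
    rw [Set.mem_singleton_iff]
    intro hq
    exact h1.ne' (Sym2.congr_left.mp hq)
  obtain ⟨v, hv, hvS⟩ :=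
    hcut (SimpleGraph.Walk.cons e1 (SimpleGraph.Walk.cons e2 SimpleGraph.Walk.nil))
  simp only [SimpleGraph.Walk.support_cons, SimpleGraph.Walk.support_nil, List.mem_cons,
    List.mem_singleton] at hv
  rcases hv with rfl | rfl | rfl | h
  · exact absurd hvS hx
  · exact hvS
  · exact absurd hvS hy
  · exact absurd h List.not_mem_nil

lemma isRVD_of_injective (H : SimpleGraph W) {α : Type*} (c : W → α)
    (hc : Function.Injective c) : IsRVDColoring H c := by
  intro x y hxy
  obtain ⟨h1, h2, h3⟩ := cut_left H hxy
  exact ⟨_, h1, h2, h3, fun _ => Or.inl (hc.injOn), fun _ => hc.injOn⟩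

end RVDAux

section TildeAux

open SimpleGraph

variable {V : Type*}

lemma tS_adj_inl_inr (G : SimpleGraph V) (a : V) (p : ↥G.edgeSet × Fin 3) :
    (tildeSplit G).Adj (Sum.inl a) (Sum.inr p) ↔ a ∈ (p.1 : Sym2 V) := by
  obtain ⟨⟨e, he⟩, i⟩ := p
  simp [tildeSplit, SimpleGraph.fromRel_adj]
  aesop

lemma tS_adj_inr_inr (G : SimpleGraph V) (p q : ↥G.edgeSet × Fin 3) :
    (tildeSplit G).Adj (Sum.inr p) (Sum.inr q) ↔ p ≠ q := by
  simp only [tildeSplit, SimpleGraph.fromRel_adj]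
  constructor
  · rintro ⟨h, _⟩; simpa using h
  · intro h
    refine ⟨by simpa using h, Or.inl (Or.inr ⟨p, q, rfl, rfl⟩)⟩

lemma tS_not_adj_inl_inl (G : SimpleGraph V) (a b : V) :
    ¬ (tildeSplit G).Adj (Sum.inl a) (Sum.inl b) := by
  simp [tildeSplit, SimpleGraph.fromRel_adj]

lemma nbr_inl_is_inr {G : SimpleGraph V} {s0 : Set (Sym2 (V ⊕ (↥G.edgeSet × Fin 3)))} {a : V} :
    ∀ z, ((tildeSplit G).deleteEdges s0).Adj (Sum.inl a) z → ∃ p, z = Sum.inr p := by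
  rintro (b | p) h
  · exact absurd (SimpleGraph.deleteEdges_adj.mp h).1 (tS_not_adj_inl_inl G a b)
  · exact ⟨p, rfl⟩

lemma adj_of_mem_edge {G : SimpleGraph V} {e : Sym2 V} (he : e ∈ G.edgeSet) {a b : V}
    (ha : a ∈ e) (hb : b ∈ e) (hab : a ≠ b) : G.Adj a b := by
  induction e using Sym2.ind with
  | _ u v =>
    rw [SimpleGraph.mem_edgeSet] at he
    rw [Sym2.mem_iff] at ha hb
    rcases ha with rfl | rfl <;> rcases hb with rfl | rfl
    · exact absurd rfl hab
    · exact he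
    · exact he.symm
    · exact absurd rfl hab

lemma sym2_rep (z : Sym2 V) : ∃ u v, z = s(u, v) := by
  induction z using Sym2.ind with
  | _ u v => exact ⟨u, v, rfl⟩

lemma key_rvd {G : SimpleGraph V} {α : Type*} {c : (V ⊕ (↥G.edgeSet × Fin 3)) → α}
    (hc : IsRVDColoring (tildeSplit G) c)
    {x y a b : V ⊕ (↥G.edgeSet × Fin 3)} (hadj : (tildeSplit G).Adj x y)
    (hax : (tildeSplit G).Adj x a) (hay : (tildeSplit G).Adj a y)
    (hbx : (tildeSplit G).Adj x b) (hby : (tildeSplit G).Adj b y)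
    (hab : a ≠ b) : c a ≠ c b := by
  obtain ⟨S, hx, hy, hcut, hA, -⟩ := hc x y hadj.ne
  have haS := common_in_S hadj.ne hx hy hcut hax hay
  have hbS := common_in_S hadj.ne hx hy hcut hbx hby
  intro hce
  rcases hA hadj with h | h
  · exact hab (h (Set.mem_insert_of_mem _ haS) (Set.mem_insert_of_mem _ hbS) hce)
  · exact hab (h (Set.mem_insert_of_mem _ haS) (Set.mem_insert_of_mem _ hbS) hce)

end TildeAux
section FwdBwd

open SimpleGraph

variable {V : Type*}

lemma forward_rvd [Fintype V] [DecidableEq V] (G : SimpleGraph V) [DecidableRel G.Adj]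
    {k : ℕ} (C : G.Coloring (Fin k)) :
    ∃ c : (V ⊕ (↥G.edgeSet × Fin 3)) → Fin (k + 3 * G.edgeFinset.card),
      IsRVDColoring (tildeSplit G) c := by
  have hcard3 : Fintype.card (↥G.edgeSet × Fin 3) = 3 * G.edgeFinset.card := by
    rw [Fintype.card_prod, Fintype.card_fin, SimpleGraph.edgeFinset_card, mul_comm]
  set E3 := 3 * G.edgeFinset.card with hE3
  let eq3 : (↥G.edgeSet × Fin 3) ≃ Fin E3 := Fintype.equivFinOfCardEq hcard3
  set c : (V ⊕ (↥G.edgeSet × Fin 3)) → Fin (k + E3) :=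
    Sum.elim (fun v => Fin.castAdd E3 (C v)) (fun p => Fin.natAdd k (eq3 p)) with hcdef
  have hmix : ∀ (v : V) (p : ↥G.edgeSet × Fin 3), c (Sum.inl v) ≠ c (Sum.inr p) := by
    intro v p h
    have hval := congrArg Fin.val h
    simp only [hcdef, Sum.elim_inl, Sum.elim_inr, Fin.coe_castAdd, Fin.coe_natAdd] at hval
    have := (C v).isLt
    omega
  have hinr : ∀ p q, c (Sum.inr p) = c (Sum.inr q) → p = q := by
    intro p q h
    apply eq3.injective
    have hval := congrArg Fin.val h
    simp only [hcdef, Sum.elim_inr, Fin.coe_natAdd] at hval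
    exact Fin.ext (by omega)
  have hprop : ∀ u v, G.Adj u v → c (Sum.inl u) ≠ c (Sum.inl v) := by
    intro u v huv h
    apply C.valid huv
    have hval := congrArg Fin.val h
    simp only [hcdef, Sum.elim_inl, Fin.coe_castAdd] at hval
    exact Fin.ext hval
  have hinjS : ∀ S : Set (V ⊕ (↥G.edgeSet × Fin 3)),
      (∀ z ∈ S, ∃ p, z = Sum.inr p) → Set.InjOn c S := by
    intro S hS z1 h1 z2 h2 hce
    obtain ⟨p1, rfl⟩ := hS z1 h1
    obtain ⟨p2, rfl⟩ := hS z2 h2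
    exact congrArg Sum.inr (hinr p1 p2 hce)
  have hinjIns : ∀ (a : V) (S : Set (V ⊕ (↥G.edgeSet × Fin 3))),
      (∀ z ∈ S, ∃ p, z = Sum.inr p) → Set.InjOn c (insert (Sum.inl a) S) := by
    intro a S hS z1 h1 z2 h2 hce
    rcases Set.mem_insert_iff.mp h1 with rfl | h1 <;>
      rcases Set.mem_insert_iff.mp h2 with rfl | h2
    · rfl
    · obtain ⟨p2, rfl⟩ := hS _ h2
      exact absurd hce (hmix a p2)
    · obtain ⟨p1, rfl⟩ := hS _ h1
      exact absurd hce.symm (hmix a p1)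
    · exact hinjS S hS h1 h2 hce
  refine ⟨c, ?_⟩
  intro x y hxy
  obtain (a | p) := x
  · -- x = inl a : use neighbors of x
    obtain ⟨h1, h2, h3⟩ := cut_left (tildeSplit G) hxy
    have hS : ∀ z ∈ {v | ((tildeSplit G).deleteEdges {s(Sum.inl a, y)}).Adj (Sum.inl a) v},
        ∃ p, z = Sum.inr p := fun z hz => nbr_inl_is_inr z hz
    refine ⟨_, h1, h2, h3, fun _ => Or.inl (hinjIns a _ hS), fun _ => hinjS _ hS⟩
  · obtain (b | q) := y
    · -- x = inr p, y = inl b : use neighbors of y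
      obtain ⟨h1, h2, h3⟩ := cut_right (tildeSplit G) hxy
      have hS : ∀ z ∈ {v | ((tildeSplit G).deleteEdges
          {s(Sum.inr p, Sum.inl b)}).Adj (Sum.inl b) v},
          ∃ p, z = Sum.inr p := fun z hz => nbr_inl_is_inr z hz
      refine ⟨_, h1, h2, h3, fun _ => Or.inr (hinjIns b _ hS), fun _ => hinjS _ hS⟩
    · -- x = inr p, y = inr q
      obtain ⟨h1, h2, h3⟩ := cut_left (tildeSplit G) hxy
      refine ⟨_, h1, h2, h3, ?_, ?_⟩
      · intro _
        left
        intro z1 hz1 z2 hz2 hce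
        have hmem : ∀ z ∈ insert (Sum.inr p)
            {v | ((tildeSplit G).deleteEdges {s(Sum.inr p, Sum.inr q)}).Adj (Sum.inr p) v},
            (∃ r, z = Sum.inr r) ∨ ∃ w, z = Sum.inl w ∧ w ∈ (p.1 : Sym2 V) := by
          rintro (w | r) hz
          · rcases Set.mem_insert_iff.mp hz with h | h
            · exact absurd h (by simp)
            · right
              refine ⟨w, rfl, ?_⟩
              have hadj := (SimpleGraph.deleteEdges_adj.mp h).1
              exact (tS_adj_inl_inr G w p).mp hadj.symm
          · exact Or.inl ⟨r, rfl⟩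
        rcases hmem z1 hz1 with ⟨r1, rfl⟩ | ⟨w1, rfl, hw1⟩ <;>
          rcases hmem z2 hz2 with ⟨r2, rfl⟩ | ⟨w2, rfl, hw2⟩
        · exact congrArg Sum.inr (hinr r1 r2 hce)
        · exact absurd hce.symm (hmix w2 r1)
        · exact absurd hce (hmix w1 r2)
        · by_cases hw : w1 = w2
          · exact congrArg Sum.inl hw
          · exact absurd hce (hprop w1 w2 (adj_of_mem_edge p.1.2 hw1 hw2 hw))
      · intro hna
        exact absurd ((tS_adj_inr_inr G p q).mpr fun h => hxy (congrArg Sum.inr h)) hna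

end FwdBwd
section Bwd

open SimpleGraph

variable {V : Type*}

lemma backward_rvd [Fintype V] [DecidableEq V] (G : SimpleGraph V) [DecidableRel G.Adj]
    (hiso : ∀ v : V, ∃ u : V, G.Adj v u)
    {n k : ℕ} (c : (V ⊕ (↥G.edgeSet × Fin 3)) → Fin n)
    (hc : IsRVDColoring (tildeSplit G) c) (hn : n ≤ k + 3 * G.edgeFinset.card) :
    G.Colorable k := by
  classical
  have hslots2 : ∀ i : Fin 3, ∃ i₁ i₂ : Fin 3, i₁ ≠ i₂ ∧ i₁ ≠ i ∧ i₂ ≠ i := by decide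
  have hslot1 : ∀ i j : Fin 3, i ≠ j → ∃ m : Fin 3, m ≠ i ∧ m ≠ j := by decide
  set g : ↥G.edgeSet × Fin 3 → Fin n := fun p => c (Sum.inr p) with hgdef
  -- all of V_s gets distinct colors
  have hginj : Function.Injective g := by
    rintro ⟨e, i⟩ ⟨f, j⟩ hgr
    by_contra hne
    by_cases hef : e = f
    · subst hef
      have hij : i ≠ j := fun h => hne (by rw [h])
      obtain ⟨m, hmi, hmj⟩ := hslot1 i j hij
      obtain ⟨u, v, huv⟩ := sym2_rep (e : Sym2 V)
      have hu : u ∈ (e : Sym2 V) := by rw [huv]; exact Sym2.mem_iff.mpr (Or.inl rfl)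
      refine key_rvd hc (x := Sum.inr (e, m)) (y := Sum.inl u)
        (a := Sum.inr (e, i)) (b := Sum.inr (e, j))
        ((tS_adj_inl_inr G u (e, m)).mpr hu).symm
        ((tS_adj_inr_inr G _ _).mpr fun h => hmi (congrArg Prod.snd h))
        (((tS_adj_inl_inr G u (e, i)).mpr hu).symm)
        ((tS_adj_inr_inr G _ _).mpr fun h => hmj (congrArg Prod.snd h))
        ((tS_adj_inl_inr G u (e, j)).mpr hu).symm
        (fun h => hne (Sum.inr.inj h)) hgr
    · obtain ⟨i₁, i₂, h12, h1i, h2i⟩ := hslots2 i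
      refine key_rvd hc (x := Sum.inr (e, i₁)) (y := Sum.inr (e, i₂))
        (a := Sum.inr (e, i)) (b := Sum.inr (f, j))
        ((tS_adj_inr_inr G _ _).mpr fun h => h12 (congrArg Prod.snd h))
        ((tS_adj_inr_inr G _ _).mpr fun h => h1i (congrArg Prod.snd h))
        ((tS_adj_inr_inr G _ _).mpr fun h => h2i (congrArg Prod.snd h).symm)
        ((tS_adj_inr_inr G _ _).mpr fun h => hef (congrArg Prod.fst h))
        ((tS_adj_inr_inr G _ _).mpr fun h => hef (congrArg Prod.fst h).symm)
        (fun h => hne (Sum.inr.inj h)) hgr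
  -- V-colors avoid V_s-colors
  have hmixb : ∀ (u : V) (r : ↥G.edgeSet × Fin 3), c (Sum.inl u) ≠ c (Sum.inr r) := by
    intro u r
    obtain ⟨w, hw⟩ := hiso u
    set e : ↥G.edgeSet := ⟨s(u, w), G.mem_edgeSet.mpr hw⟩ with hedef
    have hu : u ∈ (e : Sym2 V) := Sym2.mem_iff.mpr (Or.inl rfl)
    have hchoice : ∃ i₁ i₂ : Fin 3, i₁ ≠ i₂ ∧ (e, i₁) ≠ r ∧ (e, i₂) ≠ r := by
      obtain ⟨re, ri⟩ := r
      by_cases hre : re = e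
      · subst hre
        obtain ⟨i₁, i₂, h12, h1, h2⟩ := hslots2 ri
        exact ⟨i₁, i₂, h12, fun h => h1 (congrArg Prod.snd h),
          fun h => h2 (congrArg Prod.snd h)⟩
      · exact ⟨0, 1, by decide, fun h => hre (congrArg Prod.fst h).symm,
          fun h => hre (congrArg Prod.fst h).symm⟩
    obtain ⟨i₁, i₂, h12, h1r, h2r⟩ := hchoice
    refine key_rvd hc (x := Sum.inr (e, i₁)) (y := Sum.inr (e, i₂))
      (a := Sum.inl u) (b := Sum.inr r)
      ((tS_adj_inr_inr G _ _).mpr fun h => h12 (congrArg Prod.snd h))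
      (((tS_adj_inl_inr G u (e, i₁)).mpr hu).symm)
      ((tS_adj_inl_inr G u (e, i₂)).mpr hu)
      ((tS_adj_inr_inr G _ _).mpr fun h => h1r h)
      ((tS_adj_inr_inr G _ _).mpr fun h => h2r h.symm)
      (by simp)
  -- adjacent vertices of V get distinct colors
  have hpropb : ∀ u v : V, G.Adj u v → c (Sum.inl u) ≠ c (Sum.inl v) := by
    intro u v huv
    set e : ↥G.edgeSet := ⟨s(u, v), G.mem_edgeSet.mpr huv⟩ with hedef
    have hu : u ∈ (e : Sym2 V) := Sym2.mem_iff.mpr (Or.inl rfl)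
    have hv : v ∈ (e : Sym2 V) := Sym2.mem_iff.mpr (Or.inr rfl)
    refine key_rvd hc (x := Sum.inr (e, 0)) (y := Sum.inr (e, 1))
      (a := Sum.inl u) (b := Sum.inl v)
      ((tS_adj_inr_inr G _ _).mpr fun h => by simpa using congrArg Prod.snd h)
      (((tS_adj_inl_inr G u (e, 0)).mpr hu).symm)
      ((tS_adj_inl_inr G u (e, 1)).mpr hu)
      (((tS_adj_inl_inr G v (e, 0)).mpr hv).symm)
      (((tS_adj_inl_inr G v (e, 1)).mpr hv).symm).symm
      (fun h => huv.ne (Sum.inl.inj h))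
  -- assemble the coloring
  let A : Set (Fin n) := Set.range g
  have hAcard : Fintype.card A = 3 * G.edgeFinset.card := by
    rw [Set.card_range_of_injective hginj, Fintype.card_prod, Fintype.card_fin,
      ← SimpleGraph.edgeFinset_card, mul_comm]
  let C0 : G.Coloring ↥(Aᶜ) := SimpleGraph.Coloring.mk
    (fun v => ⟨c (Sum.inl v), fun hmem => by
      obtain ⟨r, hr⟩ := hmem
      exact hmixb v r hr.symm⟩)
    (fun {u v} h hEq => hpropb u v h (congrArg Subtype.val hEq))
  apply C0.colorable.mono
  rw [Fintype.card_compl_set, hAcard, Fintype.card_fin]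
  omega

end Bwd

/-- For `G` with no isolated vertices and at least one edge,
`χ(G) ≤ k` iff `rvd(G̃) ≤ k + 3|E|`, where `G̃` is the split reduction graph. -/
theorem colorable_iff_rvd_tildeSplit_le [Fintype V] [DecidableEq V] (G : SimpleGraph V)
    [DecidableRel G.Adj]
    (hiso : ∀ v : V, ∃ u : V, G.Adj v u) (hE : G.edgeSet.Nonempty)
    (k : ℕ) (hk : 0 < k) :
    G.Colorable k ↔ rvd (tildeSplit G) ≤ k + 3 * G.edgeFinset.card := by
  classical
  constructor
  · rintro ⟨C⟩
    obtain ⟨c, hc⟩ := forward_rvd G C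
    exact Nat.sInf_le ⟨c, hc⟩
  · intro h
    have hne : {m | ∃ c : (V ⊕ (↥G.edgeSet × Fin 3)) → Fin m,
        IsRVDColoring (tildeSplit G) c}.Nonempty :=
      ⟨Fintype.card (V ⊕ (↥G.edgeSet × Fin 3)), ⇑(Fintype.equivFin _),
        isRVD_of_injective _ _ (Equiv.injective _)⟩
    obtain ⟨c, hc⟩ := Nat.sInf_mem hne
    exact backward_rvd G hiso c hc h
end

section
/- Let G = (V, E) be a graph with no isolated vertices, at least one edge, V = {v₁, …, v_n}, and let k be a positive integer. Construct the graph H as follows: take k disjoint copies V_j = {v₁^j, …, v_n^j} (j ∈ [k]) of V, let V_s = {s_{uv}, s'_{uv} : uv ∈ E} and V_t = {t_{uv}, t'_{uv} : uv ∈ E}, set V(H) = ⋃_{j=1}^k V_j ∪ V_s ∪ V_t, and let E(H) consist of the edges u^j s_{uv}, u^j s'_{uv}, v^j s_{uv}, v^j s'_{uv} for each uv ∈ E and j ∈ [k], together with all edges between V_s and V_t. Then kn/α(G) + 2|E| ≤ k·χ_f(G) + 2|E| ≤ χ_k(G) + 2|E| ≤ rvd(H) ≤ k·χ(G) + 2|E|,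 where α(G) is the independence number, χ_f(G) the fractional chromatic number, χ_k(G) the k-fold chromatic number, and χ(G) the chromatic number of G. -/
open SimpleGraph

variable {V : Type*}

/-! ### Auxiliary lemmas for STATEMENT 14 -/

section Statement14Aux

lemma RVDaux.exists_first_step {W : Type*} {H : SimpleGraph W} {x y : W} (hxy : x ≠ y)
    (p : (H.deleteEdges {s(x, y)}).Walk x y) :
    ∃ v ∈ p.support, H.Adj x v ∧ v ≠ y := by
  cases p with
  | nil => exact absurd rfl hxy
  | cons h q =>
    rename_i v
    rw [SimpleGraph.deleteEdges_adj] at h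
    refine ⟨v, ?_, h.1, ?_⟩
    · simp [SimpleGraph.Walk.support_cons, q.start_mem_support]
    · rintro rfl
      exact h.2 (by simp)

lemma RVDaux.exists_last_step {W : Type*} {H : SimpleGraph W} {x y : W} (hxy : x ≠ y)
    (p : (H.deleteEdges {s(x, y)}).Walk x y) :
    ∃ v ∈ p.support, H.Adj y v ∧ v ≠ x := by
  cases hp : p.reverse with
  | nil => exact absurd rfl hxy
  | cons h q =>
    rename_i v
    rw [SimpleGraph.deleteEdges_adj] at h
    refine ⟨v, ?_, h.1, ?_⟩
    · have : v ∈ p.reverse.support := by rw [hp]; simp [q.start_mem_support]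
      rwa [Walk.support_reverse, List.mem_reverse] at this
    · rintro rfl
      exact h.2 (by simp [Sym2.eq_swap])

/-- Isolating `x` gives a valid cut. -/
lemma RVDaux.isolate_left {W : Type*} {H : SimpleGraph W} {x y : W} (hxy : x ≠ y) :
    x ∉ {v | H.Adj x v ∧ v ≠ y} ∧ y ∉ {v | H.Adj x v ∧ v ≠ y} ∧
    ∀ p : (H.deleteEdges {s(x, y)}).Walk x y,
      ∃ v ∈ p.support, v ∈ {v | H.Adj x v ∧ v ≠ y} := by
  refine ⟨fun h => H.irrefl h.1, fun h => h.2 rfl, fun p => ?_⟩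
  obtain ⟨v, hv, h1, h2⟩ := RVDaux.exists_first_step hxy p
  exact ⟨v, hv, h1, h2⟩

lemma RVDaux.isolate_right {W : Type*} {H : SimpleGraph W} {x y : W} (hxy : x ≠ y) :
    x ∉ {v | H.Adj y v ∧ v ≠ x} ∧ y ∉ {v | H.Adj y v ∧ v ≠ x} ∧
    ∀ p : (H.deleteEdges {s(x, y)}).Walk x y,
      ∃ v ∈ p.support, v ∈ {v | H.Adj y v ∧ v ≠ x} := by
  refine ⟨fun h => h.2 rfl, fun h => H.irrefl h.1, fun p => ?_⟩
  obtain ⟨v, hv, h1, h2⟩ := RVDaux.exists_last_step hxy p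
  exact ⟨v, hv, h1, h2⟩

lemma RVDaux.mem_cut_of_two_path {W : Type*} {H : SimpleGraph W} {x y u : W} {S : Set W}
    (hxy : x ≠ y)
    (hcut : ∀ p : (H.deleteEdges {s(x, y)}).Walk x y, ∃ v ∈ p.support, v ∈ S)
    (hxS : x ∉ S) (hyS : y ∉ S) (hxu : H.Adj x u) (huy : H.Adj u y)
    (hux : u ≠ x) (huy' : u ≠ y) : u ∈ S := by
  have h1 : (H.deleteEdges {s(x, y)}).Adj x u := by
    rw [SimpleGraph.deleteEdges_adj]
    refine ⟨hxu, ?_⟩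
    simp only [Set.mem_singleton_iff, Sym2.eq, Sym2.rel_iff', Prod.mk.injEq, Prod.swap_prod_mk]
    push_neg
    exact ⟨fun _ => huy', fun h _ => hxy h⟩
  have h2 : (H.deleteEdges {s(x, y)}).Adj u y := by
    rw [SimpleGraph.deleteEdges_adj]
    refine ⟨huy, ?_⟩
    simp only [Set.mem_singleton_iff, Sym2.eq, Sym2.rel_iff', Prod.mk.injEq, Prod.swap_prod_mk]
    push_neg
    exact ⟨fun h => absurd h hux, fun _ h => absurd h.symm hxy⟩
  obtain ⟨v, hv, hvS⟩ := hcut (Walk.cons h1 (Walk.cons h2 Walk.nil))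
  simp only [Walk.support_cons, Walk.support_nil, List.mem_cons, List.mem_singleton] at hv
  rcases hv with rfl | rfl | rfl | h
  · exact absurd hvS hxS
  · exact hvS
  · exact absurd hvS hyS
  · cases h

lemma RVDaux.sym2_eq_of_mem {a b : V} {e : Sym2 V} (ha : a ∈ e) (hb : b ∈ e) (hab : a ≠ b) :
    e = s(a, b) := (Sym2.mem_and_mem_iff hab).mp ⟨ha, hb⟩

lemma RVDaux.comp {α γ : Type*} {G : SimpleGraph V} {c : V → α} {f : α → γ}
    (h : IsRVDColoring G c) (hf : Function.Injective f) : IsRVDColoring G (f ∘ c) := by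
  intro x y hxy
  obtain ⟨S, h1, h2, h3, h4, h5⟩ := h x y hxy
  refine ⟨S, h1, h2, h3, ?_, ?_⟩
  · intro hadj
    refine (h4 hadj).imp ?_ ?_ <;>
      exact fun hinj a ha b hb hab => hinj ha hb (hf hab)
  · intro hnadj
    exact fun a ha b hb hab => h5 hnadj ha hb (hf hab)

end Statement14Aux

section HBipAdj
variable {G : SimpleGraph V} {k : ℕ}

lemma hbip_adj_inl_inl (u w : V × Fin k) : ¬ (HBip G k).Adj (Sum.inl u) (Sum.inl w) := by
  simp [HBip, fromRel_adj]

lemma hbip_adj_inl_inrl (a : V) (j : Fin k) (e : ↥G.edgeSet) (i : Fin 2) :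
    (HBip G k).Adj (Sum.inl (a, j)) (Sum.inr (Sum.inl (e, i))) ↔ a ∈ (e : Sym2 V) := by
  simp [HBip, fromRel_adj]
  constructor
  · rintro ⟨x, ⟨hx, (⟨rfl, -⟩ | ⟨rfl, -⟩)⟩, ha⟩ <;> exact ha
  · intro h
    exact ⟨e.1, ⟨e.2, by fin_cases i <;> simp⟩, h⟩

lemma hbip_adj_inl_inrr (u : V × Fin k) (q : ↥G.edgeSet × Fin 2) :
    ¬ (HBip G k).Adj (Sum.inl u) (Sum.inr (Sum.inr q)) := by
  simp [HBip, fromRel_adj]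

lemma hbip_adj_inrl_inrr (p q : ↥G.edgeSet × Fin 2) :
    (HBip G k).Adj (Sum.inr (Sum.inl p)) (Sum.inr (Sum.inr q)) := by
  simp only [HBip, fromRel_adj]
  refine ⟨by simp, Or.inl (Or.inr ⟨p, q, rfl, rfl⟩)⟩

lemma hbip_adj_inrl_inrl (p q : ↥G.edgeSet × Fin 2) :
    ¬ (HBip G k).Adj (Sum.inr (Sum.inl p)) (Sum.inr (Sum.inl q)) := by
  simp [HBip, fromRel_adj]

lemma hbip_adj_inrr_inrr (p q : ↥G.edgeSet × Fin 2) :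
    ¬ (HBip G k).Adj (Sum.inr (Sum.inr p)) (Sum.inr (Sum.inr q)) := by
  simp [HBip, fromRel_adj]

lemma hbip_adj_inl_iff (a : V) (j : Fin k)
    (v : (V × Fin k) ⊕ ((↥G.edgeSet × Fin 2) ⊕ (↥G.edgeSet × Fin 2))) :
    (HBip G k).Adj (Sum.inl (a, j)) v ↔
      ∃ (e : ↥G.edgeSet) (i : Fin 2), v = Sum.inr (Sum.inl (e, i)) ∧ a ∈ (e : Sym2 V) := by
  rcases v with w | p | q
  · simp [hbip_adj_inl_inl]
  · obtain ⟨e, i⟩ := p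
    simp only [hbip_adj_inl_inrl]
    constructor
    · intro h; exact ⟨e, i, rfl, h⟩
    · rintro ⟨e', i', h, he⟩
      simp only [Sum.inr.injEq, Sum.inl.injEq, Prod.mk.injEq] at h
      obtain ⟨rfl, rfl⟩ := h
      exact he
  · simp [hbip_adj_inl_inrr]

lemma hbip_adj_inrr_iff (q : ↥G.edgeSet × Fin 2)
    (v : (V × Fin k) ⊕ ((↥G.edgeSet × Fin 2) ⊕ (↥G.edgeSet × Fin 2))) :
    (HBip G k).Adj (Sum.inr (Sum.inr q)) v ↔ ∃ p, v = Sum.inr (Sum.inl p) := by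
  rcases v with w | p | q'
  · constructor
    · intro h; exact absurd h.symm (hbip_adj_inl_inrr w q)
    · rintro ⟨p, h⟩; cases h
  · exact ⟨fun _ => ⟨p, rfl⟩, fun _ => ((HBip G k).adj_symm (hbip_adj_inrl_inrr p q))⟩
  · constructor
    · intro h; exact absurd h (hbip_adj_inrr_inrr q q')
    · rintro ⟨p, h⟩; cases h

lemma hbip_adj_inrl_iff (p : ↥G.edgeSet × Fin 2)
    (v : (V × Fin k) ⊕ ((↥G.edgeSet × Fin 2) ⊕ (↥G.edgeSet × Fin 2))) :
    (HBip G k).Adj (Sum.inr (Sum.inl p)) v ↔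
      (∃ (a : V) (j : Fin k), v = Sum.inl (a, j) ∧ a ∈ (p.1 : Sym2 V)) ∨
      ∃ q, v = Sum.inr (Sum.inr q) := by
  rcases v with ⟨a, j⟩ | p' | q
  · rw [(HBip G k).adj_comm, hbip_adj_inl_inrl a j p.1 p.2]
    constructor
    · intro h; exact Or.inl ⟨a, j, rfl, h⟩
    · rintro (⟨a', j', h, ha⟩ | ⟨q, h⟩)
      · simp only [Sum.inl.injEq, Prod.mk.injEq] at h
        obtain ⟨rfl, rfl⟩ := h
        exact ha
      · cases h
  · constructor
    · intro h; exact absurd h (hbip_adj_inrl_inrl p p')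
    · rintro (⟨a, j, h, _⟩ | ⟨q, h⟩) <;> cases h
  · exact ⟨fun _ => Or.inr ⟨q, rfl⟩, fun _ => hbip_adj_inrl_inrr p q⟩

section upper
variable {β : Type*}

/-- The base rvd coloring of `HBip G k`, valued in a sum type. -/
def RVDaux.c0 (G : SimpleGraph V) (k : ℕ) (C : V → β) :
    (V × Fin k) ⊕ ((↥G.edgeSet × Fin 2) ⊕ (↥G.edgeSet × Fin 2)) →
      (β × Fin k) ⊕ (↥G.edgeSet × Fin 2) :=
  Sum.elim (fun aj => Sum.inl (C aj.1, aj.2)) (Sum.elim Sum.inr Sum.inr)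

lemma RVDaux.c0_isRVD (G : SimpleGraph V) (k : ℕ) (C : V → β)
    (hC : ∀ {a b : V}, G.Adj a b → C a ≠ C b) :
    IsRVDColoring (HBip G k) (RVDaux.c0 G k C) := by
  intro x y hxy
  rcases x with ⟨a, j⟩ | px
  · -- x is a copy vertex: isolate x
    obtain ⟨h1, h2, h3⟩ := RVDaux.isolate_left (H := HBip G k) hxy
    refine ⟨_, h1, h2, h3, ?_, ?_⟩
    · intro _
      left
      rintro v₁ hv₁ v₂ hv₂ hc
      rcases hv₁ with rfl | ⟨hadj₁, -⟩
      · rcases hv₂ with rfl | ⟨hadj₂, -⟩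
        · rfl
        · obtain ⟨e, i, rfl, -⟩ := (hbip_adj_inl_iff a j v₂).mp hadj₂
          simp [RVDaux.c0] at hc
      · obtain ⟨e₁, i₁, rfl, -⟩ := (hbip_adj_inl_iff a j v₁).mp hadj₁
        rcases hv₂ with rfl | ⟨hadj₂, -⟩
        · simp [RVDaux.c0] at hc
        · obtain ⟨e₂, i₂, rfl, -⟩ := (hbip_adj_inl_iff a j v₂).mp hadj₂
          simp only [RVDaux.c0, Sum.elim_inl, Sum.elim_inr, Sum.inr.injEq] at hc
          rw [hc]
    · intro _
      rintro v₁ ⟨hadj₁, -⟩ v₂ ⟨hadj₂, -⟩ hc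
      obtain ⟨e₁, i₁, rfl, -⟩ := (hbip_adj_inl_iff a j v₁).mp hadj₁
      obtain ⟨e₂, i₂, rfl, -⟩ := (hbip_adj_inl_iff a j v₂).mp hadj₂
      simp only [RVDaux.c0, Sum.elim_inl, Sum.elim_inr, Sum.inr.injEq] at hc
      rw [hc]
  · rcases y with ⟨b, j'⟩ | py
    · -- y is a copy vertex: isolate y
      obtain ⟨h1, h2, h3⟩ := RVDaux.isolate_right (H := HBip G k) hxy
      refine ⟨_, h1, h2, h3, ?_, ?_⟩
      · intro _
        right
        rintro v₁ hv₁ v₂ hv₂ hc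
        rcases hv₁ with rfl | ⟨hadj₁, -⟩
        · rcases hv₂ with rfl | ⟨hadj₂, -⟩
          · rfl
          · obtain ⟨e, i, rfl, -⟩ := (hbip_adj_inl_iff b j' v₂).mp hadj₂
            simp [RVDaux.c0] at hc
        · obtain ⟨e₁, i₁, rfl, -⟩ := (hbip_adj_inl_iff b j' v₁).mp hadj₁
          rcases hv₂ with rfl | ⟨hadj₂, -⟩
          · simp [RVDaux.c0] at hc
          · obtain ⟨e₂, i₂, rfl, -⟩ := (hbip_adj_inl_iff b j' v₂).mp hadj₂
            simp only [RVDaux.c0, Sum.elim_inl, Sum.elim_inr, Sum.inr.injEq] at hc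
            rw [hc]
      · intro _
        rintro v₁ ⟨hadj₁, -⟩ v₂ ⟨hadj₂, -⟩ hc
        obtain ⟨e₁, i₁, rfl, -⟩ := (hbip_adj_inl_iff b j' v₁).mp hadj₁
        obtain ⟨e₂, i₂, rfl, -⟩ := (hbip_adj_inl_iff b j' v₂).mp hadj₂
        simp only [RVDaux.c0, Sum.elim_inl, Sum.elim_inr, Sum.inr.injEq] at hc
        rw [hc]
    · rcases px with p | q
      · rcases py with p' | q'
        · -- both in Vs: isolate x; nonadjacent
          obtain ⟨h1, h2, h3⟩ := RVDaux.isolate_left (H := HBip G k) hxy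
          refine ⟨_, h1, h2, h3, ?_, ?_⟩
          · intro h
            exact absurd h (hbip_adj_inrl_inrl p p')
          · intro _
            rintro v₁ ⟨hadj₁, -⟩ v₂ ⟨hadj₂, -⟩ hc
            rcases (hbip_adj_inrl_iff p v₁).mp hadj₁ with ⟨a₁, j₁, rfl, ha₁⟩ | ⟨q₁, rfl⟩ <;>
              rcases (hbip_adj_inrl_iff p v₂).mp hadj₂ with ⟨a₂, j₂, rfl, ha₂⟩ | ⟨q₂, rfl⟩
            · simp only [RVDaux.c0, Sum.elim_inl, Sum.inl.injEq, Prod.mk.injEq] at hc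
              obtain ⟨hcc, rfl⟩ := hc
              rcases eq_or_ne a₁ a₂ with rfl | hne
              · rfl
              · have hadj : G.Adj a₁ a₂ := by
                  have h2 := (p.1).2
                  rw [RVDaux.sym2_eq_of_mem ha₁ ha₂ hne] at h2
                  exact G.mem_edgeSet.mp h2
                exact absurd hcc (hC hadj)
            · simp [RVDaux.c0] at hc
            · simp [RVDaux.c0] at hc
            · simp only [RVDaux.c0, Sum.elim_inl, Sum.elim_inr, Sum.inr.injEq] at hc
              rw [hc]
        · -- x in Vs, y in Vt: isolate y; adjacent
          obtain ⟨h1, h2, h3⟩ := RVDaux.isolate_right (H := HBip G k) hxy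
          refine ⟨_, h1, h2, h3, ?_, ?_⟩
          · intro _
            left
            rintro v₁ hv₁ v₂ hv₂ hc
            have key : ∀ v, v ∈ insert (Sum.inr (Sum.inl p) :
                (V × Fin k) ⊕ ((↥G.edgeSet × Fin 2) ⊕ (↥G.edgeSet × Fin 2)))
                {v | (HBip G k).Adj (Sum.inr (Sum.inr q')) v ∧ v ≠ Sum.inr (Sum.inl p)} →
                ∃ r, v = Sum.inr (Sum.inl r) := by
              rintro v (rfl | ⟨hadj, -⟩)
              · exact ⟨p, rfl⟩
              · exact (hbip_adj_inrr_iff q' v).mp hadj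
            obtain ⟨r₁, rfl⟩ := key v₁ hv₁
            obtain ⟨r₂, rfl⟩ := key v₂ hv₂
            simp only [RVDaux.c0, Sum.elim_inl, Sum.elim_inr, Sum.inr.injEq] at hc
            rw [hc]
          · intro h
            exact absurd (hbip_adj_inrl_inrr p q') h
      · -- x in Vt: isolate x
        obtain ⟨h1, h2, h3⟩ := RVDaux.isolate_left (H := HBip G k) hxy
        refine ⟨_, h1, h2, h3, ?_, ?_⟩
        · intro hadj
          right
          obtain ⟨p', hy⟩ := (hbip_adj_inrr_iff q _).mp hadj
          rw [Sum.inr.injEq] at hy; subst hy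
          rintro v₁ hv₁ v₂ hv₂ hc
          have key : ∀ v, v ∈ insert (Sum.inr (Sum.inl p') :
              (V × Fin k) ⊕ ((↥G.edgeSet × Fin 2) ⊕ (↥G.edgeSet × Fin 2)))
              {v | (HBip G k).Adj (Sum.inr (Sum.inr q)) v ∧ v ≠ Sum.inr (Sum.inl p')} →
              ∃ r, v = Sum.inr (Sum.inl r) := by
            rintro v (rfl | ⟨hadj', -⟩)
            · exact ⟨p', rfl⟩
            · exact (hbip_adj_inrr_iff q v).mp hadj'
          obtain ⟨r₁, rfl⟩ := key v₁ hv₁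
          obtain ⟨r₂, rfl⟩ := key v₂ hv₂
          simp only [RVDaux.c0, Sum.elim_inl, Sum.elim_inr, Sum.inr.injEq] at hc
          rw [hc]
        · intro _
          rintro v₁ ⟨hadj₁, -⟩ v₂ ⟨hadj₂, -⟩ hc
          obtain ⟨r₁, rfl⟩ := (hbip_adj_inrr_iff q v₁).mp hadj₁
          obtain ⟨r₂, rfl⟩ := (hbip_adj_inrr_iff q v₂).mp hadj₂
          simp only [RVDaux.c0, Sum.elim_inl, Sum.elim_inr, Sum.inr.injEq] at hc
          rw [hc]

end upper

end HBipAdj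

section frac
variable [Fintype V] (G : SimpleGraph V)

lemma kfold_set_nonempty (k' : ℕ) :
    {n | ∃ c : V → Finset (Fin n), IsKFoldColoring G k' c}.Nonempty := by
  classical
  refine ⟨Fintype.card V * k', fun v =>
    Finset.univ.image (fun j : Fin k' => finProdFinEquiv ((Fintype.equivFin V) v, j)), ?_, ?_⟩
  · intro v
    rw [Finset.card_image_of_injective _ (fun j₁ j₂ h => by
      simpa using (finProdFinEquiv.injective h))]
    simp
  · intro u v huv
    rw [Finset.disjoint_left]
    rintro i hi₁ hi₂
    simp only [Finset.mem_image, Finset.mem_univ, true_and] at hi₁ hi₂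
    obtain ⟨j₁, rfl⟩ := hi₁
    obtain ⟨j₂, h⟩ := hi₂
    have := finProdFinEquiv.injective h
    have h2 : (Fintype.equivFin V) v = (Fintype.equivFin V) u := (Prod.mk.injEq _ _ _ _ ▸ this).1
    exact G.ne_of_adj huv ((Fintype.equivFin V).injective h2.symm)

lemma indep_bddAbove :
    BddAbove {n | ∃ s : Set V, (∀ u ∈ s, ∀ v ∈ s, ¬ G.Adj u v) ∧ s.ncard = n} := by
  refine ⟨Fintype.card V, ?_⟩
  rintro n ⟨s, -, rfl⟩
  have := Set.ncard_le_ncard (Set.subset_univ s) Set.finite_univ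
  rwa [Set.ncard_univ, Nat.card_eq_fintype_card] at this

lemma card_indep_le (s : Finset V) (hs : ∀ u ∈ s, ∀ v ∈ s, ¬ G.Adj u v) :
    s.card ≤ indepNumber G := by
  apply le_csSup (indep_bddAbove G)
  exact ⟨(s : Set V), by simpa using hs, Set.ncard_coe_finset s⟩

lemma kfold_counting {k' n : ℕ} (c : V → Finset (Fin n)) (h : IsKFoldColoring G k' c) :
    k' * Fintype.card V ≤ n * indepNumber G := by
  classical
  have key : ∀ i : Fin n, (Finset.univ.filter (fun v => i ∈ c v)).card ≤ indepNumber G := by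
    intro i
    apply card_indep_le
    intro u hu v hv hadj
    simp only [Finset.mem_filter] at hu hv
    exact (Finset.disjoint_left.mp (h.2 u v hadj)) hu.2 hv.2
  calc k' * Fintype.card V = ∑ v : V, k' := by simp [mul_comm]
    _ = ∑ v : V, (c v).card := by simp [h.1]
    _ = ∑ v : V, ∑ i : Fin n, if i ∈ c v then 1 else 0 := by
        refine Finset.sum_congr rfl fun v _ => ?_
        rw [← Finset.card_filter]
        congr 1
        ext i
        simp
    _ = ∑ i : Fin n, ∑ v : V, if i ∈ c v then 1 else 0 := Finset.sum_comm
    _ = ∑ i : Fin n, (Finset.univ.filter (fun v => i ∈ c v)).card := by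
        refine Finset.sum_congr rfl fun i _ => ?_
        rw [← Finset.card_filter]
    _ ≤ ∑ i : Fin n, indepNumber G := Finset.sum_le_sum fun i _ => key i
    _ = n * indepNumber G := by simp [mul_comm]

lemma frac_le_kfold_div (k : ℕ) (hk : 0 < k) :
    fracChromaticNumber G ≤ (kfoldChromaticNumber G k : ℝ) / k := by
  have hbdd : BddBelow (Set.range fun k' : {k : ℕ // 0 < k} =>
      (kfoldChromaticNumber G k' : ℝ) / (k' : ℕ)) := by
    refine ⟨0, ?_⟩
    rintro x ⟨i, rfl⟩
    positivity
  exact ciInf_le hbdd ⟨k, hk⟩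

lemma card_div_indep_le_frac (hV : Nonempty V) (hα : 1 ≤ indepNumber G) :
    (Fintype.card V : ℝ) / (indepNumber G : ℝ) ≤ fracChromaticNumber G := by
  apply le_ciInf
  rintro ⟨k', hk'⟩
  have hmem := Nat.sInf_mem (kfold_set_nonempty G k')
  obtain ⟨c, hc⟩ := hmem
  have hcount := kfold_counting G c hc
  have hα' : (0 : ℝ) < (indepNumber G : ℝ) := by exact_mod_cast hα
  have hk'' : (0 : ℝ) < (k' : ℝ) := by exact_mod_cast hk'
  rw [div_le_div_iff₀ hα' hk'']
  calc (Fintype.card V : ℝ) * k' = ((k' * Fintype.card V : ℕ) : ℝ) := by push_cast; ring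
    _ ≤ ((kfoldChromaticNumber G k' * indepNumber G : ℕ) : ℝ) := by exact_mod_cast hcount
    _ = (kfoldChromaticNumber G k' : ℝ) * (indepNumber G : ℝ) := by push_cast; ring

end frac

section lower
variable [Fintype V] [DecidableEq V]

lemma hbip_lower (G : SimpleGraph V) [DecidableRel G.Adj]
    (hiso : ∀ v : V, ∃ u : V, G.Adj v u) (hE : G.edgeSet.Nonempty) (k : ℕ) (hk : 0 < k)
    {m : ℕ} (c : (V × Fin k) ⊕ ((↥G.edgeSet × Fin 2) ⊕ (↥G.edgeSet × Fin 2)) → Fin m)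
    (hc : IsRVDColoring (HBip G k) c) :
    kfoldChromaticNumber G k + 2 * G.edgeFinset.card ≤ m := by
  classical
  -- For each edge e, the cut separating s_e from s'_e
  have main : ∀ e : ↥G.edgeSet, ∃ S : Set _,
      (∀ q : ↥G.edgeSet × Fin 2, Sum.inr (Sum.inr q) ∈ S) ∧
      (∀ a ∈ (e : Sym2 V), ∀ j : Fin k, Sum.inl (a, j) ∈ S) ∧
      Set.InjOn c S := by
    intro e
    have hxy : (Sum.inr (Sum.inl (e, (0 : Fin 2))) :
        (V × Fin k) ⊕ ((↥G.edgeSet × Fin 2) ⊕ (↥G.edgeSet × Fin 2))) ≠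
        Sum.inr (Sum.inl (e, 1)) := by simp [Fin.ext_iff]
    obtain ⟨S, hxS, hyS, hcut, -, hrb⟩ := hc _ _ hxy
    refine ⟨S, ?_, ?_, hrb (hbip_adj_inrl_inrl _ _)⟩
    · intro q
      refine RVDaux.mem_cut_of_two_path hxy hcut hxS hyS ?_ ?_ (by simp) (by simp)
      · exact hbip_adj_inrl_inrr (e, 0) q
      · exact ((HBip G k).adj_comm _ _).mp (hbip_adj_inrl_inrr (e, 1) q)
    · intro a ha j
      refine RVDaux.mem_cut_of_two_path hxy hcut hxS hyS ?_ ?_ (by simp) (by simp)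
      · exact ((HBip G k).adj_comm _ _).mp ((hbip_adj_inl_inrl a j e 0).mpr ha)
      · exact (hbip_adj_inl_inrl a j e 1).mpr ha
  obtain ⟨e₀, he₀⟩ := hE
  obtain ⟨S₀, hS₀t, -, hS₀inj⟩ := main ⟨e₀, he₀⟩
  -- the colors of V_t
  set T : Finset (Fin m) :=
    Finset.univ.image (fun q : ↥G.edgeSet × Fin 2 => c (Sum.inr (Sum.inr q))) with hT
  have hTinj : Function.Injective
      (fun q : ↥G.edgeSet × Fin 2 => c (Sum.inr (Sum.inr q))) := by
    intro q₁ q₂ h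
    have := hS₀inj (hS₀t q₁) (hS₀t q₂) h
    simpa using this
  have hTcard : T.card = 2 * G.edgeFinset.card := by
    rw [hT, Finset.card_image_of_injective _ hTinj, Finset.card_univ, Fintype.card_prod,
      Fintype.card_fin, SimpleGraph.edgeFinset_card]
    ring
  have hTm : 2 * G.edgeFinset.card ≤ m := by
    rw [← hTcard]
    simpa using Finset.card_le_univ T
  -- copy colors avoid T
  have hedge : ∀ a : V, ∃ e : ↥G.edgeSet, a ∈ (e : Sym2 V) := by
    intro a
    obtain ⟨u, hu⟩ := hiso a
    exact ⟨⟨s(a, u), G.mem_edgeSet.mpr hu⟩, Sym2.mem_mk_left a u⟩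
  have havoid : ∀ (a : V) (e : ↥G.edgeSet), a ∈ (e : Sym2 V) → ∀ j : Fin k,
      c (Sum.inl (a, j)) ∉ T := by
    intro a e ha j hmm
    rw [hT, Finset.mem_image] at hmm
    obtain ⟨q, -, hq⟩ := hmm
    obtain ⟨S, hSt, hSl, hSinj⟩ := main e
    have := hSinj (hSt q) (hSl a ha j) hq
    simp at this
  choose ε hε using hedge
  -- build the k-fold coloring
  have hcard : Fintype.card {i : Fin m // i ∉ T} = m - 2 * G.edgeFinset.card := by
    rw [← hTcard]
    simp [Fintype.card_subtype_compl, Fintype.card_coe]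
  let φ : {i : Fin m // i ∉ T} ≃ Fin (m - 2 * G.edgeFinset.card) :=
    Fintype.equivFinOfCardEq hcard
  have hkf : kfoldChromaticNumber G k ≤ m - 2 * G.edgeFinset.card := by
    apply Nat.sInf_le
    refine ⟨fun a => Finset.univ.image
      (fun j : Fin k => φ ⟨c (Sum.inl (a, j)), havoid a (ε a) (hε a) j⟩), ?_, ?_⟩
    · intro a
      rw [Finset.card_image_of_injective, Finset.card_univ, Fintype.card_fin]
      intro j₁ j₂ h
      have h2 := Subtype.ext_iff.mp (φ.injective h)
      obtain ⟨S, -, hSl, hSinj⟩ := main (ε a)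
      have := hSinj (hSl a (hε a) j₁) (hSl a (hε a) j₂) h2
      simpa using this
    · intro a b hab
      rw [Finset.disjoint_left]
      rintro i hi₁ hi₂
      simp only [Finset.mem_image, Finset.mem_univ, true_and] at hi₁ hi₂
      obtain ⟨j₁, hj₁⟩ := hi₁
      obtain ⟨j₂, hj₂⟩ := hi₂
      rw [← hj₂] at hj₁
      have h2 := Subtype.ext_iff.mp (φ.injective hj₁)
      obtain ⟨S, -, hSl, hSinj⟩ := main ⟨s(a, b), G.mem_edgeSet.mpr hab⟩
      have := hSinj (hSl a (Sym2.mem_mk_left a b) j₁) (hSl b (Sym2.mem_mk_right a b) j₂) h2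
      simp only [Sum.inl.injEq, Prod.mk.injEq] at this
      exact G.ne_of_adj hab this.1
  omega

end lower


section Statement14Main
variable [Fintype V] [DecidableEq V]

lemma RVDaux.one_le_indep (G : SimpleGraph V) (hV : Nonempty V) : 1 ≤ indepNumber G := by
  apply le_csSup (indep_bddAbove G)
  refine ⟨{hV.some}, ?_, Set.ncard_singleton _⟩
  intro u hu w hw
  rw [Set.mem_singleton_iff] at hu hw
  subst hu; subst hw
  exact G.irrefl

lemma RVDaux.upper_mem (G : SimpleGraph V) [DecidableRel G.Adj] (k : ℕ) :
    (k * natChromaticNumber G + 2 * G.edgeFinset.card) ∈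
      {n | ∃ c : (V × Fin k) ⊕ ((↥G.edgeSet × Fin 2) ⊕ (↥G.edgeSet × Fin 2)) → Fin n,
        IsRVDColoring (HBip G k) c} := by
  classical
  have hcol : G.Colorable (natChromaticNumber G) :=
    Nat.sInf_mem (⟨Fintype.card V, G.colorable_of_fintype⟩ :
      {n | G.Colorable n}.Nonempty)
  obtain ⟨C⟩ := hcol
  have hcc : Fintype.card ((Fin (natChromaticNumber G) × Fin k) ⊕ (↥G.edgeSet × Fin 2)) =
      k * natChromaticNumber G + 2 * G.edgeFinset.card := by
    have h1 : Fintype.card ↥G.edgeSet = G.edgeFinset.card := by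
      exact (SimpleGraph.edgeFinset_card).symm
    simp only [Fintype.card_sum, Fintype.card_prod, Fintype.card_fin, h1]
    ring
  refine ⟨(Fintype.equivFinOfCardEq hcc) ∘ (RVDaux.c0 G k C), ?_⟩
  exact RVDaux.comp (RVDaux.c0_isRVD G k C (fun hab => C.valid hab))
    (Fintype.equivFinOfCardEq hcc).injective

end Statement14Main

/-- For the graph `H` built from `k` copies of `V` together with `V_s` and
`V_t`, we have `kn/α(G) + 2|E| ≤ k·χ_f(G) + 2|E| ≤ χ_k(G) + 2|E| ≤ rvd(H) ≤
k·χ(G) + 2|E|`. -/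
theorem rvd_HBip_bounds [Fintype V] [DecidableEq V] (G : SimpleGraph V)
    [DecidableRel G.Adj]
    (hiso : ∀ v : V, ∃ u : V, G.Adj v u) (hE : G.edgeSet.Nonempty)
    (k : ℕ) (hk : 0 < k) :
    ((k : ℝ) * (Fintype.card V : ℝ) / (indepNumber G : ℝ) + 2 * (G.edgeFinset.card : ℝ)
        ≤ (k : ℝ) * fracChromaticNumber G + 2 * (G.edgeFinset.card : ℝ)) ∧
    ((k : ℝ) * fracChromaticNumber G + 2 * (G.edgeFinset.card : ℝ)
        ≤ (kfoldChromaticNumber G k : ℝ) + 2 * (G.edgeFinset.card : ℝ)) ∧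
    (kfoldChromaticNumber G k + 2 * G.edgeFinset.card ≤ rvd (HBip G k)) ∧
    (rvd (HBip G k) ≤ k * natChromaticNumber G + 2 * G.edgeFinset.card) := by
    classical
  obtain ⟨e₀, he₀⟩ := hE
  have hV : Nonempty V := ⟨e₀.out.1⟩
  have hα := RVDaux.one_le_indep G hV
  have hfrac := card_div_indep_le_frac G hV hα
  have hupper_mem := RVDaux.upper_mem G k
  refine ⟨?_, ?_, ?_, ?_⟩
  · apply add_le_add_left
    rw [mul_div_assoc]
    exact mul_le_mul_of_nonneg_left hfrac (by positivity)
  · apply add_le_add_left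
    have h := frac_le_kfold_div G k hk
    have hk0 : (k : ℝ) ≠ 0 := by positivity
    calc (k : ℝ) * fracChromaticNumber G
        ≤ (k : ℝ) * ((kfoldChromaticNumber G k : ℝ) / k) :=
          mul_le_mul_of_nonneg_left h (by positivity)
      _ = (kfoldChromaticNumber G k : ℝ) := by field_simp
  · unfold rvd
    obtain ⟨c, hc⟩ := Nat.sInf_mem (⟨_, hupper_mem⟩ : Set.Nonempty _)
    exact hbip_lower G hiso ⟨e₀, he₀⟩ k hk c hc
  · exact Nat.sInf_le hupper_mem
end

section
/- Let G = (V, E) be a graph with no isolated vertices, at least one edge, V = {v₁, …, v_n}, and let k be a positive integer. Let H be the graph with k disjoint copies V_j = {v₁^j, …, v_n^j} (j ∈ [k]) of V, V_s = {s_{uv}, s'_{uv} : uv ∈ E}, V_t = {t_{uv}, t'_{uv} : uv ∈ E}, vertex set V(H) = ⋃_{j=1}^k V_j ∪ V_s ∪ V_t, and edge set consisting of u^j s_{uv}, u^j s'_{uv}, v^j s_{uv}, v^j s'_{uv} for each uv ∈ E and j ∈ [k] together with all edges between V_s and V_t. Then for every rainbow vertex-disconnection coloring c_H of H and every edge uv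 ∈ E, the set Q_{uv} = {u^1, …, u^k} ∪ {v^1, …, v^k} is rainbow under c_H, and the colors appearing on ⋃_{j=1}^k V_j are disjoint from the colors appearing on V_t; consequently χ_k(G) ≤ rvd(H) − 2|E|. -/
open SimpleGraph

variable {V : Type*}

lemma hbip_key {α : Type*} (G : SimpleGraph V) (k : ℕ)
    (c : ((V × Fin k) ⊕ ((↥G.edgeSet × Fin 2) ⊕ (↥G.edgeSet × Fin 2))) → α)
    (hc : IsRVDColoring (HBip G k) c) (e : ↥G.edgeSet) :
    ∃ S, Set.InjOn c S ∧ (∀ (a : V) (j : Fin k), a ∈ (e : Sym2 V) → Sum.inl (a, j) ∈ S)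
      ∧ (∀ q : ↥G.edgeSet × Fin 2, Sum.inr (Sum.inr q) ∈ S) := by
  set s0 : ((V × Fin k) ⊕ ((↥G.edgeSet × Fin 2) ⊕ (↥G.edgeSet × Fin 2))) :=
    Sum.inr (Sum.inl (e, 0)) with hs0
  set s1 : ((V × Fin k) ⊕ ((↥G.edgeSet × Fin 2) ⊕ (↥G.edgeSet × Fin 2))) :=
    Sum.inr (Sum.inl (e, 1)) with hs1
  have hne : s0 ≠ s1 := by simp [hs0, hs1]
  have hnadj : ¬ (HBip G k).Adj s0 s1 := by
    simp [HBip, hs0, hs1]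
  obtain ⟨S, hx, hy, hwalk, _, hinj⟩ := hc s0 s1 hne
  have hmid : ∀ w, (HBip G k).Adj s0 w → (HBip G k).Adj w s1 → w ∈ S := by
    intro w h1 h2
    have hw0 : w ≠ s0 := h1.ne'
    have hw1 : w ≠ s1 := h2.ne
    have h1' : ((HBip G k).deleteEdges {s(s0, s1)}).Adj s0 w := by
      rw [deleteEdges_adj]
      refine ⟨h1, ?_⟩
      simp only [Set.mem_singleton_iff, Sym2.eq_iff]
      rintro (⟨-, rfl⟩ | ⟨h, -⟩)
      · exact hw1 rfl
      · exact hne h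
    have h2' : ((HBip G k).deleteEdges {s(s0, s1)}).Adj w s1 := by
      rw [deleteEdges_adj]
      refine ⟨h2, ?_⟩
      simp only [Set.mem_singleton_iff, Sym2.eq_iff]
      rintro (⟨rfl, -⟩ | ⟨-, h⟩)
      · exact hw0 rfl
      · exact hne h.symm
    obtain ⟨v, hv, hvS⟩ := hwalk (SimpleGraph.Walk.cons h1' (SimpleGraph.Walk.cons h2' SimpleGraph.Walk.nil))
    simp only [SimpleGraph.Walk.support_cons, SimpleGraph.Walk.support_nil,
      List.mem_cons, List.mem_singleton] at hv
    rcases hv with rfl | rfl | rfl | h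
    · exact absurd hvS hx
    · exact hvS
    · exact absurd hvS hy
    · exact absurd h List.not_mem_nil
  refine ⟨S, hinj hnadj, ?_, ?_⟩
  · intro a j ha
    apply hmid
    · exact (SimpleGraph.fromRel_adj _ _ _).mpr ⟨by simp [hs0], Or.inr (Or.inl ⟨a, j, e, 0, rfl, rfl, ha⟩)⟩
    · exact (SimpleGraph.fromRel_adj _ _ _).mpr ⟨by simp [hs1], Or.inl (Or.inl ⟨a, j, e, 1, rfl, rfl, ha⟩)⟩
  · intro q
    apply hmid
    · exact (SimpleGraph.fromRel_adj _ _ _).mpr ⟨by simp [hs0], Or.inl (Or.inr ⟨(e,0), q, rfl, rfl⟩)⟩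
    · exact (SimpleGraph.fromRel_adj _ _ _).mpr ⟨by simp [hs1], Or.inr (Or.inr ⟨(e,1), q, rfl, rfl⟩)⟩
lemma rvd_set_nonempty {W : Type*} [Fintype W] [DecidableEq W] (H : SimpleGraph W) :
    ∃ c : W → Fin (Fintype.card W), IsRVDColoring H c := by
  refine ⟨Fintype.equivFin W, ?_⟩
  have hinj : Function.Injective (Fintype.equivFin W : W → Fin (Fintype.card W)) :=
    (Fintype.equivFin W).injective
  intro x y hxy
  refine ⟨({x, y} : Set W)ᶜ, by simp, by simp, ?_, fun _ => Or.inl (hinj.injOn),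
    fun _ => hinj.injOn⟩
  intro p
  cases p with
  | nil => exact absurd rfl hxy
  | @cons _ w _ h q =>
    refine ⟨w, ?_, ?_⟩
    · simp only [SimpleGraph.Walk.support_cons, List.mem_cons]
      exact Or.inr q.start_mem_support
    · rw [deleteEdges_adj] at h
      simp only [Set.mem_compl_iff, Set.mem_insert_iff, Set.mem_singleton_iff, not_or]
      refine ⟨h.1.ne', fun hwy => ?_⟩
      subst hwy
      exact h.2 rfl

/-- For every rainbow vertex-disconnection coloring `c` of `H` and every edge
`uv ∈ E`, the set `Q_{uv}` of all copies of `u` and `v` is rainbow under `c`, and the colors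
on the copies of `V` are disjoint from the colors on `V_t`; consequently
`χ_k(G) ≤ rvd(H) - 2|E|`. -/
theorem rvd_HBip_coloring_properties [Fintype V] [DecidableEq V] (G : SimpleGraph V)
    [DecidableRel G.Adj]
    (hiso : ∀ v : V, ∃ u : V, G.Adj v u) (hE : G.edgeSet.Nonempty)
    (k : ℕ) (hk : 0 < k) :
    (∀ {α : Type} (c : ((V × Fin k) ⊕ ((↥G.edgeSet × Fin 2) ⊕ (↥G.edgeSet × Fin 2))) → α),
      IsRVDColoring (HBip G k) c →
        (∀ e : ↥G.edgeSet,
          Set.InjOn c {x | ∃ (a : V) (j : Fin k), x = Sum.inl (a, j) ∧ a ∈ (e : Sym2 V)}) ∧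
        Disjoint (c '' {x | ∃ (a : V) (j : Fin k), x = Sum.inl (a, j)})
          (c '' {x | ∃ p, x = Sum.inr (Sum.inr p)})) ∧
    (kfoldChromaticNumber G k : ℤ) ≤ (rvd (HBip G k) : ℤ) - 2 * (G.edgeFinset.card : ℤ) := by
  classical
  constructor
  · intro α c hc
    constructor
    · intro e x hx y hy hxy
      obtain ⟨S, hS, hcopy, _⟩ := hbip_key G k c hc e
      obtain ⟨a, j, rfl, ha⟩ := hx
      obtain ⟨b, j', rfl, hb⟩ := hy
      exact hS (hcopy a j ha) (hcopy b j' hb) hxy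
    · rw [Set.disjoint_left]
      rintro z ⟨x, ⟨a, j, rfl⟩, rfl⟩ ⟨y, ⟨p, rfl⟩, hzy⟩
      obtain ⟨u, hu⟩ := hiso a
      obtain ⟨S, hS, hcopy, ht⟩ := hbip_key G k c hc ⟨s(a, u), G.mem_edgeSet.mpr hu⟩
      have := hS (ht p) (hcopy a j (Sym2.mem_mk_left a u)) hzy
      simp at this
  · have hmem : rvd (HBip G k) ∈
        {n | ∃ c : ((V × Fin k) ⊕ ((↥G.edgeSet × Fin 2) ⊕ (↥G.edgeSet × Fin 2))) → Fin n,
          IsRVDColoring (HBip G k) c} :=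
      Nat.sInf_mem ⟨Fintype.card _, rvd_set_nonempty _⟩
    set n := rvd (HBip G k) with hn
    obtain ⟨c, hc⟩ := hmem
    obtain ⟨e0v, he0⟩ := hE
    obtain ⟨S0, hS0, _, ht0⟩ := hbip_key G k c hc ⟨e0v, he0⟩
    have htinj : Function.Injective
        (fun q : ↥G.edgeSet × Fin 2 => c (Sum.inr (Sum.inr q))) := by
      intro p q hpq
      have := hS0 (ht0 p) (ht0 q) hpq
      simpa using this
    set Tt : Finset (Fin n) :=
      Finset.univ.image (fun q : ↥G.edgeSet × Fin 2 => c (Sum.inr (Sum.inr q))) with hTt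
    have hTtcard : Tt.card = 2 * G.edgeFinset.card := by
      rw [hTt, Finset.card_image_of_injective _ htinj, Finset.card_univ, Fintype.card_prod,
        Fintype.card_fin, SimpleGraph.edgeFinset, Set.toFinset_card]
      ring
    have hcopy_not : ∀ (a : V) (j : Fin k), c (Sum.inl (a, j)) ∉ Tt := by
      intro a j hmem2
      simp only [hTt, Finset.mem_image, Finset.mem_univ, true_and] at hmem2
      obtain ⟨q, hq⟩ := hmem2
      obtain ⟨u, hu⟩ := hiso a
      obtain ⟨S, hS, hcopy, ht⟩ := hbip_key G k c hc ⟨s(a, u), G.mem_edgeSet.mpr hu⟩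
      have := hS (ht q) (hcopy a j (Sym2.mem_mk_left a u)) hq
      simp at this
    have h2E : 2 * G.edgeFinset.card ≤ n := by
      rw [← hTtcard]
      simpa using Tt.card_le_univ
    have hccard : Ttᶜ.card = n - 2 * G.edgeFinset.card := by
      rw [Finset.card_compl, hTtcard, Fintype.card_fin]
    set m := n - 2 * G.edgeFinset.card with hm
    set fiso := Ttᶜ.orderIsoOfFin hccard with hfiso
    set c' : V → Finset (Fin m) := fun a =>
      Finset.univ.image (fun j : Fin k =>
        fiso.symm ⟨c (Sum.inl (a, j)), Finset.mem_compl.mpr (hcopy_not a j)⟩) with hc'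
    have hkfold : IsKFoldColoring G k c' := by
      constructor
      · intro a
        rw [hc']
        rw [Finset.card_image_of_injective _ ?_, Finset.card_univ, Fintype.card_fin]
        intro j j' hjj'
        obtain ⟨u, hu⟩ := hiso a
        obtain ⟨S, hS, hcopy, _⟩ := hbip_key G k c hc ⟨s(a, u), G.mem_edgeSet.mpr hu⟩
        have h2 : c (Sum.inl (a, j)) = c (Sum.inl (a, j')) :=
          congrArg Subtype.val (fiso.symm.injective hjj')
        have := hS (hcopy a j (Sym2.mem_mk_left a u)) (hcopy a j' (Sym2.mem_mk_left a u)) h2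
        simpa using this
      · intro a b hab
        rw [Finset.disjoint_left]
        intro x hxa hxb
        simp only [hc', Finset.mem_image, Finset.mem_univ, true_and] at hxa hxb
        obtain ⟨j, hj⟩ := hxa
        obtain ⟨j', hj'⟩ := hxb
        obtain ⟨S, hS, hcopy, _⟩ := hbip_key G k c hc ⟨s(a, b), G.mem_edgeSet.mpr hab⟩
        have h2 : c (Sum.inl (a, j)) = c (Sum.inl (b, j')) :=
          congrArg Subtype.val (fiso.symm.injective (hj.trans hj'.symm))
        have := hS (hcopy a j (Sym2.mem_mk_left a b)) (hcopy b j' (Sym2.mem_mk_right a b)) h2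
        simp only [Sum.inl.injEq, Prod.mk.injEq] at this
        exact hab.ne this.1
    have hmle : kfoldChromaticNumber G k ≤ m := Nat.sInf_le ⟨c', hkfold⟩
    have hcast : (m : ℤ) = (n : ℤ) - 2 * (G.edgeFinset.card : ℤ) := by
      rw [hm]
      push_cast [Nat.cast_sub h2E]
      ring
    calc (kfoldChromaticNumber G k : ℤ) ≤ (m : ℤ) := by exact_mod_cast hmle
      _ = (n : ℤ) - 2 * (G.edgeFinset.card : ℤ) := hcast
end
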